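/- Let M be a monoid. (i) If M admits a robust semigroup Markov language over a finite alphabet A representing a semigroup generating set for M, then M admits a robust monoid Markov language over A. (ii) If M admits a robust semigroup Markov language over an alphabet of the form B ∪ {1}, where B represents a monoid generating set for M and the extra letter 1 satisfies φ(1) = 1_M, then M admits a robust monoid Markov language over B. -/

import Mathlib

open Function

/-- A language is regular if it is accepted by a deterministic finite automaton
with a finite state set. -/
def RegularLang {A : Type} (L : Language A) : Prop :=
  ∃ (Q : Type) (_ : Fintype Q) (M : DFA A Q), M.accepts = L

/-- The product of a nonempty word under the letter-assignment `φ`; the empty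
word is sent to `none`. This is the induced map `φ⁺` on nonempty words. -/
def prodPlus {A S : Type} [Semigroup S] (φ : A → S) : List A → Option S
  | [] => none
  | a :: w => some (w.foldl (fun s b => s * φ b) (φ a))

/-- The induced monoid homomorphism `φ*` from the free monoid of words. -/
def monProd {A M : Type} [Monoid M] (φ : A → M) (w : List A) : M :=
  (w.map φ).prod

/-- A semigroup Markov language for `S` over `A` (with respect to `φ`): a regular,
`+`-prefix-closed language of nonempty words mapping bijectively onto `S` under `φ⁺`. -/
structure IsSgMarkovLang {A S : Type} [Semigroup S] (φ : A → S) (L : Language A) : Prop where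
  regular : RegularLang L
  not_empty_mem : [] ∉ L
  plus_prefix_closed : ∀ u v : List A, u ≠ [] → v ≠ [] → u ++ v ∈ L → u ∈ L
  unique_rep : ∀ s : S, ∃! w : List A, w ∈ L ∧ prodPlus φ w = some s

/-- A robust semigroup Markov language: additionally every word of `L` has minimal
length among (nonempty) words representing the same element. -/
structure IsRobustSgMarkovLang {A S : Type} [Semigroup S] (φ : A → S) (L : Language A)
    extends IsSgMarkovLang φ L : Prop where
  min_length : ∀ w ∈ L, ∀ v : List A, prodPlus φ v = prodPlus φ w → w.length ≤ v.length

/-- A monoid Markov language for `M` over `A` (with respect to `φ`): a regular,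
prefix-closed language mapping bijectively onto `M` under `φ*`. -/
structure IsMonMarkovLang {A M : Type} [Monoid M] (φ : A → M) (L : Language A) : Prop where
  regular : RegularLang L
  prefix_closed : ∀ u v : List A, u ++ v ∈ L → u ∈ L
  unique_rep : ∀ m : M, ∃! w : List A, w ∈ L ∧ monProd φ w = m

/-- A robust monoid Markov language: additionally every word of `L` has minimal
length among words representing the same element. -/
structure IsRobustMonMarkovLang {A M : Type} [Monoid M] (φ : A → M) (L : Language A)
    extends IsMonMarkovLang φ L : Prop where
  min_length : ∀ w ∈ L, ∀ v : List A, monProd φ v = monProd φ w → w.length ≤ v.length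

/-- `S` is Markov as a semigroup. -/
def SgMarkov (S : Type) [Semigroup S] : Prop :=
  ∃ (A : Type) (_ : Fintype A) (φ : A → S),
    (∀ s : S, ∃ w : List A, prodPlus φ w = some s) ∧
    ∃ L : Language A, IsSgMarkovLang φ L

/-- `S` is robustly Markov (as a semigroup) with respect to some alphabet. -/
def SgRobustlyMarkov (S : Type) [Semigroup S] : Prop :=
  ∃ (A : Type) (_ : Fintype A) (φ : A → S),
    (∀ s : S, ∃ w : List A, prodPlus φ w = some s) ∧
    ∃ L : Language A, IsRobustSgMarkovLang φ L

/-- `S` is strongly Markov (as a semigroup). -/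
def SgStronglyMarkov (S : Type) [Semigroup S] : Prop :=
  ∀ (A : Type) [Fintype A] (φ : A → S),
    (∀ s : S, ∃ w : List A, prodPlus φ w = some s) →
    ∃ L : Language A, IsRobustSgMarkovLang φ L

/-- `M` is Markov as a monoid. -/
def MonMarkov (M : Type) [Monoid M] : Prop :=
  ∃ (A : Type) (_ : Fintype A) (φ : A → M),
    Surjective (monProd φ) ∧ ∃ L : Language A, IsMonMarkovLang φ L

/-- `M` is robustly Markov (as a monoid) with respect to some alphabet. -/
def MonRobustlyMarkov (M : Type) [Monoid M] : Prop :=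
  ∃ (A : Type) (_ : Fintype A) (φ : A → M),
    Surjective (monProd φ) ∧ ∃ L : Language A, IsRobustMonMarkovLang φ L

/-- `M` is strongly Markov (as a monoid). -/
def MonStronglyMarkov (M : Type) [Monoid M] : Prop :=
  ∀ (A : Type) [Fintype A] (φ : A → M),
    Surjective (monProd φ) →
    ∃ L : Language A, IsRobustMonMarkovLang φ L


lemma foldl_mul_eq {A M : Type} [Monoid M] (φ : A → M) (t : List A) (x : M) :
    t.foldl (fun s b => s * φ b) x = x * monProd φ t := by
  induction t generalizing x with
  | nil => simp [monProd]
  | cons a t ih => simp [monProd, ih, mul_assoc]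

lemma prodPlus_eq_some {A M : Type} [Monoid M] (φ : A → M) (w : List A) (h : w ≠ []) :
    prodPlus φ w = some (monProd φ w) := by
  cases w with
  | nil => exact absurd rfl h
  | cons a t => simp [prodPlus, foldl_mul_eq, monProd]

lemma monProd_append {A M : Type} [Monoid M] (φ : A → M) (u v : List A) :
    monProd φ (u ++ v) = monProd φ u * monProd φ v := by
  simp [monProd]

lemma exists_map_some {B : Type} (w : List (Option B)) (h : none ∉ w) :
    ∃ u : List B, u.map some = w := by
  induction w with
  | nil => exact ⟨[], rfl⟩
  | cons a t ih =>
    obtain ⟨u, hu⟩ := ih (fun hm => h (List.mem_cons_of_mem _ hm))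
    cases a with
    | none => exact absurd List.mem_cons_self h
    | some b => exact ⟨b :: u, by simp [hu]⟩


-- ### Auxiliary lemmas ###


lemma lang_mem_insert {A : Type} (L : Language A) (w x : List A) :
    x ∈ (insert w L : Language A) ↔ x = w ∨ x ∈ L := Set.mem_insert_iff

/-- Insert the empty word into a regular language. -/
lemma regIns {A : Type} {L : Language A} (h : RegularLang L) :
    RegularLang (insert [] L) := by
  obtain ⟨Q, _, M, rfl⟩ := h
  refine ⟨Q × Bool, inferInstance, ⟨fun p a => (M.step p.1 a, false), (M.start, true),
    {p | p.2 = true ∨ p.1 ∈ M.accept}⟩, ?_⟩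
  set P : DFA A (Q × Bool) := ⟨fun p a => (M.step p.1 a, false), (M.start, true),
    {p | p.2 = true ∨ p.1 ∈ M.accept}⟩
  have hev : ∀ (u : List A) (q : Q), P.evalFrom (q, false) u = (M.evalFrom q u, false) := by
    intro u
    induction u with
    | nil => intro q; rfl
    | cons a t ih => intro q; simpa [DFA.evalFrom] using ih (M.step q a)
  ext u
  cases u with
  | nil =>
    simp [DFA.mem_accepts, DFA.eval, P, lang_mem_insert]
  | cons a t =>
    have h2 : P.eval (a :: t) = (M.eval (a :: t), false) := by
      simp only [DFA.eval, DFA.evalFrom, List.foldl_cons]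
      exact hev t (M.step M.start a)
    simp [DFA.mem_accepts, h2, lang_mem_insert, P]

/-- Preimage of a regular language under `List.map some` is regular. -/
lemma regPre {B : Type} {L : Language (Option B)} (h : RegularLang L) :
    RegularLang {w : List B | w.map some ∈ L} := by
  obtain ⟨Q, _, M, rfl⟩ := h
  refine ⟨Q, inferInstance, ⟨fun q b => M.step q (some b), M.start, M.accept⟩, ?_⟩
  ext u
  show List.foldl _ M.start u ∈ M.accept ↔ _
  simp only [Set.mem_setOf_eq, DFA.mem_accepts, DFA.eval, DFA.evalFrom, List.foldl_map]
  rfl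

/-- Removing a single word from a regular language keeps it regular. -/
lemma regDel {A : Type} {L : Language A} (h : RegularLang L) (w₁ : List A) :
    RegularLang {w | w ∈ L ∧ w ≠ w₁} := by
  classical
  obtain ⟨Q, _, M, rfl⟩ := h
  set n := w₁.length with hn
  set T : DFA A (Option (Fin (n + 1))) :=
    ⟨fun s a => s.bind (fun i => if h : (i : ℕ) < n ∧ w₁[(i : ℕ)]? = some a
        then some ⟨(i : ℕ) + 1, by omega⟩ else none),
      some ⟨0, Nat.succ_pos n⟩, ∅⟩ with hT
  have hstep : ∀ (s : Option (Fin (n+1))) (a : A) (j : Fin (n+1)), T.step s a = some j →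
      ∃ i : Fin (n+1), s = some i ∧ (i : ℕ) < n ∧ w₁[(i : ℕ)]? = some a ∧ (j : ℕ) = i + 1 := by
    intro s a j hs
    cases s with
    | none => simp [hT] at hs
    | some i =>
      refine ⟨i, rfl, ?_⟩
      simp only [hT, Option.bind_some] at hs
      split at hs
      · rename_i hcond
        cases hs
        exact ⟨hcond.1, hcond.2, rfl⟩
      · simp at hs
  have keyA : ∀ (u : List A) (j : Fin (n+1)), T.eval u = some j →
      u = w₁.take (j : ℕ) ∧ u.length = (j : ℕ) := by
    intro u
    induction u using List.reverseRecOn with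
    | nil =>
      intro j hj
      have : j = ⟨0, Nat.succ_pos n⟩ := by
        simpa [hT, DFA.eval] using hj.symm
      simp [this]
    | append_singleton t a ih =>
      intro j hj
      rw [DFA.eval_append_singleton] at hj
      obtain ⟨i, hi, hlt, hget, hji⟩ := hstep _ _ _ hj
      obtain ⟨ht, htl⟩ := ih i hi
      constructor
      · rw [hji, ht, ← htl]
        have : w₁.take (t.length + 1) = w₁.take t.length ++ w₁[t.length]?.toList :=
          List.take_succ
        rw [this, htl, hget]
        rfl
      · simp [hji, htl]
  have keyB : ∀ i : ℕ, ∀ h : i ≤ n, T.eval (w₁.take i) = some ⟨i, Nat.lt_succ_of_le h⟩ := by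
    intro i
    induction i with
    | zero => intro _; simp [hT, DFA.eval]
    | succ k ih =>
      intro h
      have hk : k ≤ n := Nat.le_of_succ_le h
      have hkn : k < n := h
      have hget : w₁[k]? = some (w₁[k]) := List.getElem?_eq_getElem hkn
      have : w₁.take (k + 1) = w₁.take k ++ [w₁[k]] := by
        rw [List.take_succ, hget]; rfl
      rw [this, DFA.eval_append_singleton, ih hk]
      simp only [hT, Option.bind_some]
      rw [dif_pos]
      exact ⟨hkn, hget⟩
  have keyW : ∀ u : List A, T.eval u = some ⟨n, Nat.lt_succ_self n⟩ ↔ u = w₁ := by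
    intro u
    constructor
    · intro hu
      obtain ⟨h1, _⟩ := keyA u _ hu
      rw [h1]
      simp only [hn, List.take_length]
    · rintro rfl
      have h2 := keyB n le_rfl
      rwa [show List.take n u = u by rw [hn]; exact List.take_length] at h2
  -- product automaton
  refine ⟨Q × Option (Fin (n+1)), inferInstance,
    ⟨fun p a => (M.step p.1 a, T.step p.2 a), (M.start, T.start),
      {p | p.1 ∈ M.accept ∧ p.2 ≠ some ⟨n, Nat.lt_succ_self n⟩}⟩, ?_⟩
  set P : DFA A (Q × Option (Fin (n+1))) :=
    ⟨fun p a => (M.step p.1 a, T.step p.2 a), (M.start, T.start),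
      {p | p.1 ∈ M.accept ∧ p.2 ≠ some ⟨n, Nat.lt_succ_self n⟩}⟩ with hP
  have hev : ∀ (u : List A) (q : Q) (s : Option (Fin (n+1))),
      P.evalFrom (q, s) u = (M.evalFrom q u, T.evalFrom s u) := by
    intro u
    induction u with
    | nil => intro q s; rfl
    | cons a t ih => intro q s; simpa [DFA.evalFrom] using ih (M.step q a) (T.step s a)
  ext u
  have : P.eval u = (M.eval u, T.eval u) := hev u M.start T.start
  simp only [DFA.mem_accepts, this]
  simp only [hP, Set.mem_setOf_eq, Set.mem_sep_iff]
  constructor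
  · rintro ⟨h1, h2⟩
    exact ⟨h1, fun hu => h2 ((keyW u).mpr hu)⟩
  · rintro ⟨h1, h2⟩
    exact ⟨h1, fun hu => h2 ((keyW u).mp hu)⟩

/-- (i) A robust semigroup Markov language over an alphabet representing a semigroup
generating set yields a robust monoid Markov language over the same alphabet.
(ii) A robust semigroup Markov language over `B ∪ {1}`, where `B` represents a monoid
generating set and the extra letter represents the identity, yields a robust monoid
Markov language over `B`. -/
theorem stmt4 {M : Type} [Monoid M] :
    (∀ (A : Type) [Fintype A] (φ : A → M),
      (∀ m : M, ∃ w : List A, prodPlus φ w = some m) →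
      (∃ L : Language A, IsRobustSgMarkovLang φ L) →
      ∃ K : Language A, IsRobustMonMarkovLang φ K) ∧
    (∀ (B : Type) [Fintype B] (φ : B → M),
      Surjective (monProd φ) →
      (∃ L : Language (Option B),
        IsRobustSgMarkovLang (fun x : Option B => Option.elim x 1 φ) L) →
      ∃ K : Language B, IsRobustMonMarkovLang φ K) := by
  constructor
  · -- Part (i)
    intro A _inst φ _hgen hex
    obtain ⟨L, hL⟩ := hex
    obtain ⟨w₁, ⟨hw₁L, hw₁p⟩, huniq⟩ := hL.unique_rep 1
    have hLne : ∀ w ∈ L, w ≠ [] := fun w hw h => hL.not_empty_mem (h ▸ hw)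
    have hps : ∀ w ∈ L, prodPlus φ w = some (monProd φ w) :=
      fun w hw => prodPlus_eq_some φ w (hLne w hw)
    have hw₁m : monProd φ w₁ = 1 := by
      have h := hps w₁ hw₁L; rw [h] at hw₁p; exact Option.some_injective _ hw₁p
    have hne1 : ∀ w ∈ L, w ≠ w₁ → monProd φ w ≠ 1 := by
      intro w hw hne h1
      exact hne (huniq w ⟨hw, by rw [hps w hw, h1]⟩)
    have hpadd : ∀ u v : List A, u ≠ [] → v ≠ [] → monProd φ u = 1 → u ++ v ∈ L → False := by
      intro u v hu hv h1 hmem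
      have h2 : prodPlus φ v = prodPlus φ (u ++ v) := by
        rw [prodPlus_eq_some φ v hv, prodPlus_eq_some φ (u ++ v) (by simp [hu]),
          monProd_append, h1, one_mul]
      have h3 := hL.min_length (u ++ v) hmem v h2
      rw [List.length_append] at h3
      exact hu (List.length_eq_zero_iff.mp (by omega))
    refine ⟨insert [] {w | w ∈ L ∧ w ≠ w₁}, ⟨?_, ?_, ?_⟩, ?_⟩
    · exact regIns (regDel hL.regular w₁)
    · intro u v huv
      erw [lang_mem_insert] at huv ⊢
      rcases huv with h | ⟨hmem, hne⟩
      · exact Or.inl (List.append_eq_nil_iff.mp h).1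
      · by_cases hu : u = []
        · exact Or.inl hu
        right
        by_cases hv : v = []
        · subst hv; rw [List.append_nil] at hmem hne; exact ⟨hmem, hne⟩
        have huL : u ∈ L := hL.plus_prefix_closed u v hu hv hmem
        refine ⟨huL, fun h => ?_⟩
        exact hpadd u v hu hv (by rw [h]; exact hw₁m) hmem
    · intro m
      by_cases hm : m = 1
      · subst hm
        refine ⟨[], ⟨by erw [lang_mem_insert]; exact Or.inl rfl, by simp [monProd]⟩, ?_⟩
        rintro v ⟨hv, hvp⟩
        erw [lang_mem_insert] at hv
        rcases hv with h | ⟨hvL, hvne⟩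
        · exact h
        · exact absurd hvp (hne1 v hvL hvne)
      · obtain ⟨w, ⟨hwL, hwp⟩, hwu⟩ := hL.unique_rep m
        have hwm : monProd φ w = m := by
          have h := hps w hwL; rw [h] at hwp; exact Option.some_injective _ hwp
        have hwne : w ≠ w₁ := fun h => hm (by rw [← hwm, h, hw₁m])
        refine ⟨w, ⟨by erw [lang_mem_insert]; exact Or.inr ⟨hwL, hwne⟩, hwm⟩, ?_⟩
        rintro v ⟨hv, hvp⟩
        erw [lang_mem_insert] at hv
        rcases hv with h | ⟨hvL, _⟩
        · exact absurd (by rw [← hvp, h]; simp [monProd]) hm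
        · exact hwu v ⟨hvL, by rw [hps v hvL, hvp]⟩
    · intro w hw v hv
      erw [lang_mem_insert] at hw
      rcases hw with h | ⟨hwL, hwne⟩
      · simp [h]
      · have hm : monProd φ w ≠ 1 := hne1 w hwL hwne
        have hvne : v ≠ [] := by rintro rfl; apply hm; rw [← hv]; simp [monProd]
        exact hL.min_length w hwL v
          (by rw [prodPlus_eq_some φ v hvne, prodPlus_eq_some φ w (hLne w hwL), hv])
  · -- Part (ii)
    intro B _inst φ _hsurj hex
    obtain ⟨L, hL⟩ := hex
    set ψ : Option B → M := fun x : Option B => Option.elim x 1 φ with hψ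
    have hψc : ∀ w : List B, monProd ψ (w.map some) = monProd φ w := by
      intro w
      simp only [monProd, List.map_map]
      rfl
    have hLne : ∀ w ∈ L, w ≠ [] := fun w hw h => hL.not_empty_mem (h ▸ hw)
    have hps' : ∀ w : List B, w ≠ [] → prodPlus ψ (w.map some) = some (monProd φ w) := by
      intro w h
      rw [prodPlus_eq_some ψ _ (by simpa using h), hψc w]
    have hnone : ∀ w ∈ L, none ∈ w → w = [none] := by
      intro w hw hmem
      obtain ⟨s, t, rfl⟩ := List.append_of_mem hmem
      by_cases hst : s ++ t = ([] : List (Option B))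
      · rcases List.append_eq_nil_iff.mp hst with ⟨rfl, rfl⟩; rfl
      · exfalso
        have hm : monProd ψ (s ++ none :: t) = monProd ψ (s ++ t) := by
          simp [monProd, hψ]
        have h2 : prodPlus ψ (s ++ t) = prodPlus ψ (s ++ none :: t) := by
          rw [prodPlus_eq_some _ _ hst, prodPlus_eq_some _ _ (by simp), hm]
        have h3 := hL.min_length _ hw _ h2
        simp only [List.length_append, List.length_cons] at h3
        omega
    obtain ⟨w₁, ⟨hw₁L, hw₁p⟩, huniq⟩ := hL.unique_rep 1
    have hne1 : ∀ w : List B, w.map some ∈ L → w.map some ≠ w₁ → monProd φ w ≠ 1 := by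
      intro w hw hne h1
      have hwne : w ≠ [] := by
        rintro rfl; exact hL.not_empty_mem hw
      exact hne (huniq (w.map some) ⟨hw, by rw [hps' w hwne, h1]⟩)
    have hpadd : ∀ u v : List B, u ≠ [] → v ≠ [] → monProd φ u = 1 →
        (u ++ v).map some ∈ L → False := by
      intro u v hu hv h1 hmem
      have h2 : prodPlus ψ (v.map some) = prodPlus ψ ((u ++ v).map some) := by
        rw [hps' v hv, hps' (u ++ v) (by simp [hu]), monProd_append, h1, one_mul]
      have h3 := hL.min_length _ hmem _ h2
      simp only [List.length_map, List.length_append] at h3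
      have := List.length_pos_iff.mpr hu
      omega
    have hreg : RegularLang ({w : List B | w.map some ∈ L ∧ w.map some ≠ w₁} : Language B) := by
      by_cases hn1 : none ∈ w₁
      · have hw1 : w₁ = [none] := hnone w₁ hw₁L hn1
        have hset : {w : List B | w.map some ∈ L ∧ w.map some ≠ w₁} =
            {w : List B | w.map some ∈ L} := by
          ext w
          simp only [Set.mem_setOf_eq, and_iff_left_iff_imp]
          intro _ h
          rw [hw1] at h
          cases w <;> simp at h
        rw [hset]
        exact regPre hL.regular
      · obtain ⟨u₁, hu₁⟩ := exists_map_some w₁ hn1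
        have hset : {w : List B | w.map some ∈ L ∧ w.map some ≠ w₁} =
            {w | w ∈ {w : List B | w.map some ∈ L} ∧ w ≠ u₁} := by
          ext w
          simp only [Set.mem_setOf_eq]
          constructor
          · rintro ⟨h1, h2⟩
            exact ⟨h1, fun h => h2 (by rw [h, hu₁])⟩
          · rintro ⟨h1, h2⟩
            refine ⟨h1, fun h => h2 ?_⟩
            exact List.map_injective_iff.mpr (Option.some_injective B) (by rw [h, hu₁])
        rw [hset]
        exact regDel (regPre hL.regular) u₁
    refine ⟨insert [] {w : List B | w.map some ∈ L ∧ w.map some ≠ w₁}, ⟨?_, ?_, ?_⟩, ?_⟩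
    · exact regIns hreg
    · intro u v huv
      erw [lang_mem_insert] at huv ⊢
      rcases huv with h | ⟨hmem, hne⟩
      · exact Or.inl (List.append_eq_nil_iff.mp h).1
      · by_cases hu : u = []
        · exact Or.inl hu
        right
        by_cases hv : v = []
        · subst hv; rw [List.append_nil] at hmem hne; exact ⟨hmem, hne⟩
        rw [List.map_append] at hmem
        have huL : u.map some ∈ L :=
          hL.plus_prefix_closed _ _ (by simp [hu]) (by simp [hv]) hmem
        refine ⟨huL, fun h => ?_⟩
        have h1 : monProd φ u = 1 := by
          have := hw₁p
          rw [← h, hps' u hu] at this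
          exact Option.some_injective _ this
        exact hpadd u v hu hv h1 (by rw [List.map_append]; exact hmem)
    · intro m
      by_cases hm : m = 1
      · subst hm
        refine ⟨[], ⟨by erw [lang_mem_insert]; exact Or.inl rfl, by simp [monProd]⟩, ?_⟩
        rintro v ⟨hv, hvp⟩
        erw [lang_mem_insert] at hv
        rcases hv with h | ⟨hvL, hvne⟩
        · exact h
        · exact absurd hvp (hne1 v hvL hvne)
      · obtain ⟨w, ⟨hwL, hwp⟩, hwu⟩ := hL.unique_rep m
        have hwn : none ∉ w := by
          intro hn
          have hw1 : w = [none] := hnone w hwL hn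
          rw [hw1] at hwp
          apply hm
          have : prodPlus ψ [none] = some (1 : M) := by simp [prodPlus, hψ]
          rw [this] at hwp
          exact (Option.some_injective _ hwp).symm
        obtain ⟨u, hu⟩ := exists_map_some w hwn
        have hune : u ≠ [] := by
          rintro rfl
          exact hLne w hwL hu.symm
        have hum : monProd φ u = m := by
          have h := hps' u hune
          rw [hu, hwp] at h
          exact (Option.some_injective _ h).symm
        have huw₁ : u.map some ≠ w₁ := by
          intro h
          apply hm
          have := hw₁p
          rw [← h, hu, hwp] at this
          exact Option.some_injective _ this
        refine ⟨u, ⟨by erw [lang_mem_insert]; exact Or.inr ⟨hu ▸ hwL, huw₁⟩, hum⟩, ?_⟩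
        rintro v ⟨hv, hvp⟩
        erw [lang_mem_insert] at hv
        rcases hv with h | ⟨hvL, _⟩
        · exact absurd (by rw [← hvp, h]; simp [monProd]) hm
        · have hvne : v ≠ [] := by
            rintro rfl
            exact hL.not_empty_mem hvL
          have : v.map some = w := hwu (v.map some) ⟨hvL, by rw [hps' v hvne, hvp]⟩
          exact List.map_injective_iff.mpr (Option.some_injective B) (by rw [this, ← hu])
    · intro w hw v hv
      erw [lang_mem_insert] at hw
      rcases hw with h | ⟨hwL, hwne⟩
      · simp [h]
      · have hm : monProd φ w ≠ 1 := hne1 w hwL hwne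
        have hwne' : w ≠ [] := by
          rintro rfl
          exact hL.not_empty_mem hwL
        have hvne : v ≠ [] := by rintro rfl; apply hm; rw [← hv]; simp [monProd]
        have h3 := hL.min_length _ hwL (v.map some) (by rw [hps' v hvne, hps' w hwne', hv])
        simpa using h3
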